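/- Let n ≥ 2, let ψ ∈ ℂ^d be a unit vector, and for μ = 1, …, n let λ_μ ∈ [0,1] and let E_μ be a Hermitian positive-semidefinite d×d matrix with Tr[E_μ] = 1 and E_μ ψ = 0. Define ρ_μ = λ_μ·|ψ⟩⟨ψ| + (1−λ_μ)·E_μ. Then for every d×d complex matrix σ with operator norm ‖σ‖ ≤ 1: |Tr[(σ ⊗ Id^{⊗(n−1)}) · S_n · (ρ_1 ⊗ ρ_2 ⊗ ⋯ ⊗ ρ_n)] − (∏_{μ=1}^n λ_μ)·⟨ψ, σψ⟩| ≤ ∏_{μ=1}^n (1−λ_μ). -/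

import Mathlib

open Matrix BigOperators ComplexOrder

/-- The `n`-fold tensor (Kronecker) product of `d × d` matrices, one per register. -/
noncomputable def tensPow {d n : ℕ} (A : Fin n → Matrix (Fin d) (Fin d) ℂ) :
    Matrix (Fin n → Fin d) (Fin n → Fin d) ℂ :=
  Matrix.of fun i j => ∏ μ, A μ (i μ) (j μ)

/-- The cyclic shift operator `S_n` on `(ℂ^d)^{⊗ n}`, determined by
`S_n (v_1 ⊗ v_2 ⊗ ⋯ ⊗ v_n) = v_n ⊗ v_1 ⊗ ⋯ ⊗ v_{n-1}`. -/
noncomputable def cyclicShift (d n : ℕ) [NeZero n] :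
    Matrix (Fin n → Fin d) (Fin n → Fin d) ℂ :=
  Matrix.of fun i j => if ∀ μ, i μ = j (μ - 1) then 1 else 0

namespace NonidAux


variable {d : ℕ}

/-- `W D m = D m * D (m-1) * ⋯ * D 0`. -/
noncomputable def W (D : ℕ → Matrix (Fin d) (Fin d) ℂ) : ℕ → Matrix (Fin d) (Fin d) ℂ
  | 0 => D 0
  | (m+1) => D (m+1) * W D m

lemma W_shift (D : ℕ → Matrix (Fin d) (Fin d) ℂ) (m : ℕ) :
    W D (m+1) = W (fun j => D (j+1)) m * D 0 := by
  induction m with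
  | zero => rfl
  | succ m ih =>
      show D (m+2) * W D (m+1) = W (fun j => D (j+1)) (m+1) * D 0
      rw [ih]
      show _ = (fun j => D (j+1)) (m+1) * W (fun j => D (j+1)) m * D 0
      rw [← mul_assoc]

lemma W_eq_zero (D : ℕ → Matrix (Fin d) (Fin d) ℂ) (j m : ℕ) (hjm : j < m)
    (h : D (j+1) * D j = 0) : W D m = 0 := by
  induction m with
  | zero => omega
  | succ m ih =>
      rcases Nat.lt_succ_iff_lt_or_eq.mp hjm with h' | h'
      · show D (m+1) * W D m = 0
        rw [ih h', mul_zero]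
      · subst h'
        cases j with
        | zero => show D 1 * W D 0 = 0; exact h
        | succ i =>
            show D (i+2) * W D (i+1) = 0
            show D (i+2) * (D (i+1) * W D i) = 0
            rw [← mul_assoc, h, zero_mul]



lemma zero_sub_one_fin (m : ℕ) : (0 : Fin (m+1)) - 1 = Fin.last m := by
  rcases Nat.eq_zero_or_pos m with h | h
  · subst h; decide
  · have h1 : ((1 : Fin (m+1)) : ℕ) = 1 := by
      rw [Fin.val_one']; exact Nat.mod_eq_of_lt (by omega)
    ext
    rw [Fin.sub_def]
    simp only [Fin.val_zero, h1, Fin.val_last]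
    rw [Nat.mod_eq_of_lt (by omega)]
    omega

lemma succ_sub_one_fin {m : ℕ} (j : Fin m) : (j.succ : Fin (m+1)) - 1 = j.castSucc := by
  have h : 0 < m := j.pos
  have h1 : ((1 : Fin (m+1)) : ℕ) = 1 := by
    rw [Fin.val_one']; exact Nat.mod_eq_of_lt (by omega)
  ext
  rw [Fin.sub_def]
  simp only [Fin.val_succ, h1, Fin.coe_castSucc]
  have h2 : m + 1 - 1 + ((j : ℕ) + 1) = (j : ℕ) + (m+1) := by omega
  rw [h2, Nat.add_mod_right, Nat.mod_eq_of_lt (by omega)]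

variable {d : ℕ}


lemma cons_snoc_castSucc {α : Type*} {m : ℕ} (b x : α) (k : Fin m → α) (i : Fin (m+1)) :
    (Fin.cons b (Fin.snoc k x : Fin (m+1) → α) : Fin (m+2) → α) (Fin.castSucc i)
      = (Fin.cons b k : Fin (m+1) → α) i := by
  induction i using Fin.cases with
  | zero => simp
  | succ j => rw [← Fin.succ_castSucc]; simp

lemma W_apply (m : ℕ) (D : ℕ → Matrix (Fin d) (Fin d) ℂ) (a b : Fin d) :
    W D m a b = ∑ k : Fin m → Fin d, ∏ i : Fin (m+1),
      D i ((Fin.snoc k a : Fin (m+1) → Fin d) i) ((Fin.cons b k : Fin (m+1) → Fin d) i) := by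
  induction m generalizing D a b with
  | zero =>
      rw [Fintype.sum_unique]
      rw [Fin.prod_univ_one]
      show D 0 a b = _
      simp [Fin.snoc]
  | succ m ih =>
      rw [← (Fin.snocEquiv (fun _ => Fin d)).sum_comp]
      rw [Fintype.sum_prod_type]
      have hprod : ∀ (x : Fin d) (k : Fin m → Fin d),
          (∏ i : Fin (m+2), D i
            ((Fin.snoc (Fin.snoc k x : Fin (m+1) → Fin d) a : Fin (m+2) → Fin d) i)
            ((Fin.cons b (Fin.snoc k x : Fin (m+1) → Fin d) : Fin (m+2) → Fin d) i))
          = D (m+1) a x * ∏ i : Fin (m+1),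
              D i ((Fin.snoc k x : Fin (m+1) → Fin d) i) ((Fin.cons b k : Fin (m+1) → Fin d) i) := by
        intro x k
        rw [Fin.prod_univ_castSucc]
        have h1 : ∀ i : Fin (m+1),
            D ((Fin.castSucc i : Fin (m+2)) : ℕ)
              ((Fin.snoc (Fin.snoc k x : Fin (m+1) → Fin d) a : Fin (m+2) → Fin d) (Fin.castSucc i))
              ((Fin.cons b (Fin.snoc k x : Fin (m+1) → Fin d) : Fin (m+2) → Fin d) (Fin.castSucc i))
            = D i ((Fin.snoc k x : Fin (m+1) → Fin d) i) ((Fin.cons b k : Fin (m+1) → Fin d) i) := by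
          intro i
          rw [Fin.snoc_castSucc, cons_snoc_castSucc, Fin.coe_castSucc]
        have h2 :
            D ((Fin.last (m+1) : Fin (m+2)) : ℕ)
              ((Fin.snoc (Fin.snoc k x : Fin (m+1) → Fin d) a : Fin (m+2) → Fin d) (Fin.last (m+1)))
              ((Fin.cons b (Fin.snoc k x : Fin (m+1) → Fin d) : Fin (m+2) → Fin d) (Fin.last (m+1)))
            = D (m+1) a x := by
          rw [Fin.snoc_last, ← Fin.succ_last, Fin.cons_succ, Fin.snoc_last]
          simp
        rw [Finset.prod_congr rfl (fun i _ => h1 i), h2, mul_comm]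
      have hEq : ∀ p : Fin d × (Fin m → Fin d),
          ((Fin.snocEquiv fun _ => Fin d) p) = (Fin.snoc p.2 p.1 : Fin (m+1) → Fin d) :=
        fun p => rfl
      simp only [hEq]
      calc W D (m+1) a b = (D (m+1) * W D m) a b := rfl
        _ = ∑ x : Fin d, D (m+1) a x * W D m x b := Matrix.mul_apply
        _ = ∑ x : Fin d, ∑ k : Fin m → Fin d, D (m+1) a x * ∏ i : Fin (m+1),
              D i ((Fin.snoc k x : Fin (m+1) → Fin d) i) ((Fin.cons b k : Fin (m+1) → Fin d) i) := by
            refine Finset.sum_congr rfl fun x _ => ?_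
            rw [ih, Finset.mul_sum]
        _ = _ := by
            refine Finset.sum_congr rfl fun x _ => Finset.sum_congr rfl fun k _ => ?_
            rw [hprod x k]

variable {d : ℕ}



lemma snoc_sub_one {α : Type*} {m : ℕ} (a : α) (k : Fin m → α) (i : Fin (m+1)) :
    (Fin.snoc k a : Fin (m+1) → α) (i - 1) = (Fin.cons a k : Fin (m+1) → α) i := by
  induction i using Fin.cases with
  | zero => rw [zero_sub_one_fin, Fin.snoc_last, Fin.cons_zero]
  | succ j => rw [succ_sub_one_fin, Fin.snoc_castSucc, Fin.cons_succ]

lemma trace_W (m : ℕ) (D : ℕ → Matrix (Fin d) (Fin d) ℂ) :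
    ∑ g : Fin (m+1) → Fin d, ∏ i : Fin (m+1), D i (g i) (g (i - 1)) = (W D m).trace := by
  rw [Matrix.trace]
  rw [← (Fin.snocEquiv (fun _ => Fin d)).sum_comp
    (fun g : Fin (m+1) → Fin d => ∏ i : Fin (m+1), D i (g i) (g (i - 1)))]
  rw [Fintype.sum_prod_type]
  have hEq : ∀ p : Fin d × (Fin m → Fin d),
      ((Fin.snocEquiv fun _ => Fin d) p) = (Fin.snoc p.2 p.1 : Fin (m+1) → Fin d) :=
    fun p => rfl
  simp only [hEq]
  refine Finset.sum_congr rfl fun a _ => ?_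
  rw [Matrix.diag_apply, W_apply]
  refine Finset.sum_congr rfl fun k _ => Finset.prod_congr rfl fun i _ => ?_
  rw [snoc_sub_one]

variable {d : ℕ}

noncomputable def clm (A : Matrix (Fin d) (Fin d) ℂ) :
    EuclideanSpace ℂ (Fin d) →L[ℂ] EuclideanSpace ℂ (Fin d) :=
  Matrix.toEuclideanCLM (𝕜 := ℂ) A

lemma clm_apply (A : Matrix (Fin d) (Fin d) ℂ) (x : Fin d → ℂ) :
    clm A ((WithLp.equiv 2 _).symm x) = (WithLp.equiv 2 _).symm (A.mulVec x) := by
  rfl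

lemma clm_mul (A B : Matrix (Fin d) (Fin d) ℂ) : clm (A * B) = clm A * clm B :=
  map_mul (Matrix.toEuclideanCLM (𝕜 := ℂ)) A B

lemma norm_clm_mul_le (A B : Matrix (Fin d) (Fin d) ℂ) :
    ‖clm (A * B)‖ ≤ ‖clm A‖ * ‖clm B‖ := by
  rw [clm_mul]; exact norm_mul_le _ _

lemma norm_clm_le_frob (A : Matrix (Fin d) (Fin d) ℂ) :
    ‖clm A‖ ≤ Real.sqrt (∑ a, ∑ b, ‖A a b‖^2) := by
  refine ContinuousLinearMap.opNorm_le_bound _ (Real.sqrt_nonneg _) fun v => ?_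
  have hv : v = (WithLp.equiv 2 _).symm (WithLp.equiv 2 _ v) := rfl
  set x : Fin d → ℂ := WithLp.equiv 2 _ v with hx
  rw [hv, clm_apply]
  have hkey : ∀ a : Fin d, ‖A.mulVec x a‖^2 ≤ (∑ b, ‖A a b‖^2) * (∑ b, ‖x b‖^2) := by
    intro a
    have h := norm_inner_le_norm (𝕜 := ℂ)
      ((WithLp.equiv 2 _).symm (star (A a))) ((WithLp.equiv 2 _).symm x)
    change ‖x ⬝ᵥ star (star (A a))‖ ≤ _ at h
    rw [star_star, dotProduct_comm] at h
    have hdot : A a ⬝ᵥ x = A.mulVec x a := rfl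
    rw [hdot] at h
    have hu : ‖(WithLp.equiv 2 _).symm (star (A a))‖^2
        = ∑ b, ‖A a b‖^2 := by
      rw [EuclideanSpace.norm_eq, Real.sq_sqrt (by positivity)]
      simp [WithLp.equiv_symm_apply, PiLp.toLp_apply]
    have hxn : ‖(WithLp.equiv 2 _).symm x‖^2
        = ∑ b, ‖x b‖^2 := by
      rw [EuclideanSpace.norm_eq, Real.sq_sqrt (by positivity)]
      simp [WithLp.equiv_symm_apply, PiLp.toLp_apply]
    calc ‖A.mulVec x a‖^2 ≤ (‖(WithLp.equiv 2 _).symm (star (A a))‖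
            * ‖(WithLp.equiv 2 _).symm x‖)^2 :=
          pow_le_pow_left₀ (norm_nonneg _) h 2
      _ = ‖(WithLp.equiv 2 _).symm (star (A a))‖^2
            * ‖(WithLp.equiv 2 _).symm x‖^2 := mul_pow _ _ 2
      _ = (∑ b, ‖A a b‖^2) * (∑ b, ‖x b‖^2) := by rw [hu, hxn]
  rw [EuclideanSpace.norm_eq, EuclideanSpace.norm_eq]
  simp only [WithLp.equiv_symm_apply, PiLp.toLp_apply]
  rw [← Real.sqrt_mul (by positivity)]
  refine Real.sqrt_le_sqrt ?_
  calc ∑ a, ‖A.mulVec x a‖^2 ≤ ∑ a, (∑ b, ‖A a b‖^2) * (∑ b, ‖x b‖^2) :=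
        Finset.sum_le_sum fun a _ => hkey a
    _ = (∑ a, ∑ b, ‖A a b‖^2) * (∑ b, ‖x b‖^2) := (Finset.sum_mul _ _ _).symm

lemma frob_eq_trace_re (B : Matrix (Fin d) (Fin d) ℂ) (hBH : Bᴴ = B) :
    ∑ a, ∑ b, ‖B a b‖^2 = ((B * B).trace).re := by
  have : ∀ a b, (B a b * B b a).re = ‖B b a‖^2 := by
    intro a b
    have hab : B a b = star (B b a) := by
      conv_lhs => rw [← hBH]
      rw [Matrix.conjTranspose_apply]
    rw [hab]
    rw [Complex.sq_norm, Complex.star_def,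
      ← Complex.normSq_eq_conj_mul_self, Complex.ofReal_re]
  rw [Matrix.trace]
  simp only [Matrix.diag_apply, Matrix.mul_apply]
  rw [Complex.re_sum]
  rw [Finset.sum_comm]
  refine Finset.sum_congr rfl fun b _ => ?_
  rw [Complex.re_sum]
  refine Finset.sum_congr rfl fun a _ => ?_
  exact (this b a).symm

lemma abs_trace_mul_le (X F : Matrix (Fin d) (Fin d) ℂ) (hF : F.PosSemidef) :
    ‖(X * F).trace‖ ≤ ‖clm X‖ * F.trace.re := by
  obtain ⟨B, hBH, hBB⟩ : ∃ B : Matrix (Fin d) (Fin d) ℂ, Bᴴ = B ∧ B * B = F :=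
    open scoped MatrixOrder in
    ⟨CFC.sqrt F, (CFC.sqrt_nonneg F).posSemidef.1, CFC.sqrt_mul_sqrt_self F hF.nonneg⟩
  have h1 : (X * F).trace = ∑ a, star (fun b => B b a) ⬝ᵥ X.mulVec (fun b => B b a) := by
    rw [← hBB, ← mul_assoc, Matrix.trace_mul_comm, Matrix.trace]
    refine Finset.sum_congr rfl fun a _ => ?_
    rw [Matrix.diag_apply, Matrix.mul_apply]
    refine Finset.sum_congr rfl fun b _ => ?_
    have hab : B a b = star (B b a) := by
      conv_lhs => rw [← hBH]
      rw [Matrix.conjTranspose_apply]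
    rw [Matrix.mul_apply, hab]
    rfl
  have hnorm : ∀ a : Fin d,
      ‖((WithLp.equiv 2 _).symm (fun b => B b a) : EuclideanSpace ℂ (Fin d))‖^2
        = ∑ b, ‖B b a‖^2 := by
    intro a
    rw [EuclideanSpace.norm_eq, Real.sq_sqrt (by positivity)]
    simp [WithLp.equiv_symm_apply, PiLp.toLp_apply]
  have h2 : ∀ a : Fin d, ‖star (fun b => B b a) ⬝ᵥ X.mulVec (fun b => B b a)‖
      ≤ ‖clm X‖ * ∑ b, ‖B b a‖^2 := by
    intro a
    have hinner : (inner ℂ ((WithLp.equiv 2 _).symm (fun b => B b a))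
          (clm X ((WithLp.equiv 2 _).symm (fun b => B b a))) : ℂ)
        = star (fun b => B b a) ⬝ᵥ X.mulVec (fun b => B b a) := by
      rw [clm_apply]; exact dotProduct_comm _ _
    rw [← hinner]
    calc ‖(inner ℂ ((WithLp.equiv 2 _).symm (fun b => B b a))
          (clm X ((WithLp.equiv 2 _).symm (fun b => B b a))) : ℂ)‖
        ≤ ‖((WithLp.equiv 2 _).symm (fun b => B b a) : EuclideanSpace ℂ (Fin d))‖
          * ‖clm X ((WithLp.equiv 2 _).symm (fun b => B b a))‖ := norm_inner_le_norm _ _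
      _ ≤ ‖((WithLp.equiv 2 _).symm (fun b => B b a) : EuclideanSpace ℂ (Fin d))‖
          * (‖clm X‖ * ‖((WithLp.equiv 2 _).symm (fun b => B b a) : EuclideanSpace ℂ (Fin d))‖) := by
          refine mul_le_mul_of_nonneg_left ?_ (norm_nonneg _)
          exact (clm X).le_opNorm _
      _ = ‖clm X‖ * ‖((WithLp.equiv 2 _).symm (fun b => B b a) : EuclideanSpace ℂ (Fin d))‖^2 := by
          ring
      _ = ‖clm X‖ * ∑ b, ‖B b a‖^2 := by rw [hnorm a]
  rw [h1]
  calc ‖∑ a, star (fun b => B b a) ⬝ᵥ X.mulVec (fun b => B b a)‖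
      ≤ ∑ a, ‖star (fun b => B b a) ⬝ᵥ X.mulVec (fun b => B b a)‖ :=
        norm_sum_le _ _
    _ ≤ ∑ a : Fin d, ‖clm X‖ * ∑ b, ‖B b a‖^2 := Finset.sum_le_sum fun a _ => h2 a
    _ = ‖clm X‖ * ∑ a : Fin d, ∑ b, ‖B b a‖^2 := by rw [Finset.mul_sum]
    _ = ‖clm X‖ * F.trace.re := by
        rw [Finset.sum_comm, frob_eq_trace_re B hBH, hBB]

lemma norm_clm_le_one (F : Matrix (Fin d) (Fin d) ℂ) (hF : F.PosSemidef)
    (htr : F.trace = 1) : ‖clm F‖ ≤ 1 := by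
  obtain ⟨B, hBH, hBB⟩ : ∃ B : Matrix (Fin d) (Fin d) ℂ, Bᴴ = B ∧ B * B = F :=
    open scoped MatrixOrder in
    ⟨CFC.sqrt F, (CFC.sqrt_nonneg F).posSemidef.1, CFC.sqrt_mul_sqrt_self F hF.nonneg⟩
  have hS : ∑ a, ∑ b, ‖B a b‖^2 = 1 := by
    rw [frob_eq_trace_re B hBH, hBB, htr, Complex.one_re]
  have hB1 : ‖clm B‖ ≤ 1 := by
    have := norm_clm_le_frob B
    rwa [hS, Real.sqrt_one] at this
  calc ‖clm F‖ = ‖clm (B * B)‖ := by rw [hBB]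
    _ ≤ ‖clm B‖ * ‖clm B‖ := norm_clm_mul_le _ _
    _ ≤ 1 * 1 := mul_le_mul hB1 hB1 (norm_nonneg _) zero_le_one
    _ = 1 := mul_one 1

lemma norm_clm_W_le_one (F : ℕ → Matrix (Fin d) (Fin d) ℂ)
    (h1 : ∀ j, (F j).PosSemidef) (h2 : ∀ j, (F j).trace = 1) (q : ℕ) :
    ‖clm (W F q)‖ ≤ 1 := by
  induction q with
  | zero => exact norm_clm_le_one _ (h1 _) (h2 _)
  | succ q ih =>
      refine le_trans (norm_clm_mul_le _ _) ?_
      calc ‖clm (F (q+1))‖ * ‖clm (W F q)‖ ≤ 1 * 1 :=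
            mul_le_mul (norm_clm_le_one _ (h1 _) (h2 _)) ih (norm_nonneg _) zero_le_one
        _ = 1 := mul_one 1

end NonidAux

open NonidAux
open Fin.NatCast

/-- general case of the lemma on non-identical copies: for copies
`ρ_μ = λ_μ|ψ⟩⟨ψ| + (1−λ_μ)E_μ` with the same dominant unit eigenvector `ψ`, where
each error part `E_μ` is Hermitian PSD with `Tr E_μ = 1` and `E_μ ψ = 0`, and `σ`
has operator norm at most `1`:
`|Tr[(σ ⊗ Id^{⊗(n−1)}) S_n (ρ_1 ⊗ ⋯ ⊗ ρ_n)] − (∏_μ λ_μ)⟨ψ,σψ⟩| ≤ ∏_μ (1−λ_μ)`. -/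
theorem nonidentical_copies_general {d : ℕ} (n : ℕ) [NeZero n] (hn : 2 ≤ n)
    (ψ : Fin d → ℂ) (hψ : star ψ ⬝ᵥ ψ = 1)
    (lam : Fin n → ℝ) (hlam : ∀ μ, lam μ ∈ Set.Icc (0 : ℝ) 1)
    (E : Fin n → Matrix (Fin d) (Fin d) ℂ)
    (hE : ∀ μ, (E μ).PosSemidef) (hEtr : ∀ μ, (E μ).trace = 1)
    (hEψ : ∀ μ, (E μ).mulVec ψ = 0)
    (σ : Matrix (Fin d) (Fin d) ℂ)
    (hσ : ‖Matrix.toEuclideanCLM (𝕜 := ℂ) σ‖ ≤ 1) :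
    let ρ : Fin n → Matrix (Fin d) (Fin d) ℂ := fun μ =>
      (lam μ : ℂ) • vecMulVec ψ (star ψ) + ((1 : ℂ) - (lam μ : ℂ)) • E μ
    ‖(tensPow (fun μ : Fin n => if (μ : ℕ) = 0 then σ else 1) *
          cyclicShift d n * tensPow ρ).trace -
        (∏ μ, (lam μ : ℂ)) * (star ψ ⬝ᵥ σ.mulVec ψ)‖
      ≤ ∏ μ, (1 - lam μ) := by
  intro ρ
  obtain ⟨m, rfl⟩ : ∃ m, n = m + 1 := ⟨n - 1, by omega⟩
  have hm : 1 ≤ m := by omega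
  set P : Matrix (Fin d) (Fin d) ℂ := vecMulVec ψ (star ψ) with hPdef
  set Bm : Fin (m+1) → Matrix (Fin d) (Fin d) ℂ :=
    (fun μ : Fin (m+1) => if (μ : ℕ) = 0 then σ else 1) with hBmdef
  have hρ : ∀ μ, ρ μ = (lam μ : ℂ) • P + ((1:ℂ) - (lam μ : ℂ)) • E μ := fun μ => rfl
  -- basic algebra
  have hψrow : ∀ μ, star ψ ᵥ* E μ = 0 := by
    intro μ
    have h := congrArg star (hEψ μ)
    rwa [Matrix.star_mulVec, (hE μ).1.eq, star_zero] at h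
  have hPP : P * P = P := by
    ext a b
    simp only [hPdef, Matrix.mul_apply, Matrix.vecMulVec_apply]
    calc ∑ c, ψ a * star ψ c * (ψ c * star ψ b)
        = (ψ a * star ψ b) * ∑ c, star ψ c * ψ c := by
          rw [Finset.mul_sum]; exact Finset.sum_congr rfl fun c _ => by ring
      _ = ψ a * star ψ b := by
          have : (∑ c, star ψ c * ψ c) = star ψ ⬝ᵥ ψ := rfl
          rw [this, hψ, mul_one]
  have hPE : ∀ μ, P * E μ = 0 := by
    intro μ
    ext a b
    simp only [hPdef, Matrix.mul_apply, Matrix.vecMulVec_apply, Matrix.zero_apply]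
    calc ∑ c, ψ a * star ψ c * E μ c b
        = ψ a * ∑ c, star ψ c * E μ c b := by
          rw [Finset.mul_sum]; exact Finset.sum_congr rfl fun c _ => by ring
      _ = 0 := by
          have : (∑ c, star ψ c * E μ c b) = (star ψ ᵥ* E μ) b := rfl
          rw [this, hψrow μ, Pi.zero_apply, mul_zero]
  have hEP : ∀ μ, E μ * P = 0 := by
    intro μ
    ext a b
    simp only [hPdef, Matrix.mul_apply, Matrix.vecMulVec_apply, Matrix.zero_apply]
    calc ∑ c, E μ a c * (ψ c * star ψ b)
        = (∑ c, E μ a c * ψ c) * star ψ b := by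
          rw [Finset.sum_mul]; exact Finset.sum_congr rfl fun c _ => by ring
      _ = 0 := by
          have : (∑ c, E μ a c * ψ c) = (E μ).mulVec ψ a := rfl
          rw [this, hEψ μ, Pi.zero_apply, zero_mul]
  -- Step A : trace as cyclic sum
  have hA : (tensPow Bm * cyclicShift d (m+1) * tensPow ρ).trace
      = ∑ k : Fin (m+1) → Fin d, ∏ μ : Fin (m+1), (ρ μ * Bm μ) (k μ) (k (μ - 1)) := by
    rw [Matrix.trace]
    have hdiag : ∀ i : Fin (m+1) → Fin d,
        (tensPow Bm * cyclicShift d (m+1) * tensPow ρ).diag i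
        = ∑ k : Fin (m+1) → Fin d,
            (∏ μ, Bm μ (i μ) (k (μ-1))) * ∏ μ, ρ μ (k μ) (i μ) := by
      intro i
      rw [Matrix.diag_apply, Matrix.mul_apply]
      refine Finset.sum_congr rfl fun k _ => ?_
      congr 1
      rw [Matrix.mul_apply]
      rw [Finset.sum_eq_single (fun μ => k (μ - 1))]
      · show tensPow Bm i (fun μ => k (μ-1)) * (if ∀ μ : Fin (m+1), k (μ-1) = k (μ-1) then (1:ℂ) else 0) = _
        rw [if_pos (fun μ => rfl), mul_one]
        rfl
      · intro j _ hj
        show tensPow Bm i j * (if ∀ μ : Fin (m+1), j μ = k (μ-1) then (1:ℂ) else 0) = 0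
        rw [if_neg (fun hc => hj (funext hc)), mul_zero]
      · intro h; exact absurd (Finset.mem_univ _) h
    refine (Finset.sum_congr rfl fun i _ => hdiag i).trans ?_
    rw [Finset.sum_comm]
    refine Finset.sum_congr rfl fun k _ => ?_
    have hswap : ∀ i : Fin (m+1) → Fin d,
        (∏ μ, Bm μ (i μ) (k (μ-1))) * ∏ μ, ρ μ (k μ) (i μ)
        = ∏ μ, (ρ μ (k μ) (i μ) * Bm μ (i μ) (k (μ - 1))) := by
      intro i
      rw [mul_comm, ← Finset.prod_mul_distrib]
    refine (Finset.sum_congr rfl fun i _ => hswap i).trans ?_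
    calc ∑ i : Fin (m+1) → Fin d, ∏ μ, (ρ μ (k μ) (i μ) * Bm μ (i μ) (k (μ - 1)))
        = ∏ μ, ∑ x : Fin d, ρ μ (k μ) x * Bm μ x (k (μ - 1)) :=
          (Fintype.prod_sum (f := fun (μ : Fin (m+1)) (x : Fin d) =>
            ρ μ (k μ) x * Bm μ x (k (μ - 1)))).symm
      _ = ∏ μ, (ρ μ * Bm μ) (k μ) (k (μ - 1)) :=
          Finset.prod_congr rfl fun μ _ => (Matrix.mul_apply).symm
  set Dt : Finset (Fin (m+1)) → Fin (m+1) → Matrix (Fin d) (Fin d) ℂ :=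
    fun t μ => if μ ∈ t then (lam μ : ℂ) • (P * Bm μ)
      else ((1:ℂ) - (lam μ:ℂ)) • (E μ * Bm μ) with hDtdef
  have hexp : ∑ k : Fin (m+1) → Fin d, ∏ μ, (ρ μ * Bm μ) (k μ) (k (μ - 1))
      = ∑ t : Finset (Fin (m+1)), ∑ k : Fin (m+1) → Fin d,
          ∏ μ, (Dt t μ) (k μ) (k (μ - 1)) := by
    refine (Finset.sum_congr rfl fun k _ => ?_).trans Finset.sum_comm
    calc ∏ μ, (ρ μ * Bm μ) (k μ) (k (μ - 1))
        = ∏ μ, (((lam μ : ℂ) • (P * Bm μ)) (k μ) (k (μ-1))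
            + (((1:ℂ) - (lam μ:ℂ)) • (E μ * Bm μ)) (k μ) (k (μ-1))) := by
          refine Finset.prod_congr rfl fun μ _ => ?_
          rw [hρ μ, Matrix.add_mul, smul_mul_assoc, smul_mul_assoc, Matrix.add_apply]
      _ = ∑ t : Finset (Fin (m+1)),
            (∏ μ ∈ t, ((lam μ : ℂ) • (P * Bm μ)) (k μ) (k (μ-1)))
            * ∏ μ ∈ tᶜ, (((1:ℂ) - (lam μ:ℂ)) • (E μ * Bm μ)) (k μ) (k (μ-1)) :=
          Fintype.prod_add _ _
      _ = ∑ t : Finset (Fin (m+1)), ∏ μ, (Dt t μ) (k μ) (k (μ - 1)) := by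
          refine Finset.sum_congr rfl fun t _ => ?_
          rw [← Finset.prod_mul_prod_compl t]
          congr 1
          · refine Finset.prod_congr rfl fun μ hμ => ?_
            simp only [hDtdef]
            rw [if_pos hμ]
          · refine Finset.prod_congr rfl fun μ hμ => ?_
            simp only [hDtdef]
            rw [if_neg (Finset.mem_compl.mp hμ)]
  have hTt : ∀ t : Finset (Fin (m+1)),
      ∑ k : Fin (m+1) → Fin d, ∏ μ, (Dt t μ) (k μ) (k (μ - 1))
      = (W (fun j : ℕ => Dt t ((j : Fin (m+1)))) m).trace := by
    intro t
    rw [← trace_W]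
    refine Finset.sum_congr rfl fun g _ => Finset.prod_congr rfl fun i _ => ?_
    simp [Fin.cast_val_eq_self]
  have hBone : ∀ j : ℕ, j ≠ 0 → j < m + 1 → Bm ((j : Fin (m+1))) = 1 := by
    intro j hj hjm
    simp only [hBmdef]
    rw [Fin.val_cast_of_lt hjm, if_neg hj]
  have hB0 : Bm ((0 : ℕ) : Fin (m+1)) = σ := by
    simp only [hBmdef]
    rw [Nat.cast_zero]
    simp
  have hswitch : ∀ t : Finset (Fin (m+1)), t ≠ ∅ → t ≠ Finset.univ →
      ∃ j : ℕ, j < m ∧ ¬((((j+1 : ℕ)) : Fin (m+1)) ∈ t ↔ ((j : ℕ) : Fin (m+1)) ∈ t) := by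
    intro t h0 h1
    by_contra hc
    push_neg at hc
    have hc' : ∀ j : ℕ, j < m → ((((j+1 : ℕ)) : Fin (m+1)) ∈ t ↔ ((j : ℕ) : Fin (m+1)) ∈ t) := by
      intro j hj
      by_contra hne
      exact hne (hc j hj)
    have hconst : ∀ j : ℕ, j ≤ m → (((j : ℕ) : Fin (m+1)) ∈ t ↔ ((0 : ℕ) : Fin (m+1)) ∈ t) := by
      intro j
      induction j with
      | zero => intro _; exact Iff.rfl
      | succ i ih =>
          intro hj
          rw [hc' i (by omega)]
          exact ih (by omega)
    by_cases hin : ((0 : ℕ) : Fin (m+1)) ∈ t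
    · refine h1 (Finset.eq_univ_iff_forall.mpr fun μ => ?_)
      have := (hconst μ.val (by omega)).mpr hin
      rwa [Fin.cast_val_eq_self] at this
    · refine h0 (Finset.eq_empty_iff_forall_notMem.mpr fun μ hμ => ?_)
      apply hin
      refine (hconst μ.val (by omega)).mp ?_
      rwa [Fin.cast_val_eq_self]
  have hvanish : ∀ t : Finset (Fin (m+1)), t ≠ ∅ → t ≠ Finset.univ →
      (W (fun j : ℕ => Dt t ((j : Fin (m+1)))) m).trace = 0 := by
    intro t h0 h1
    obtain ⟨j, hjm, hne⟩ := hswitch t h0 h1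
    rw [W_eq_zero _ j m hjm ?_, Matrix.trace_zero]
    have hB1 : Bm (((j+1 : ℕ) : Fin (m+1))) = 1 := hBone (j+1) (by omega) (by omega)
    by_cases h1t : (((j+1 : ℕ)) : Fin (m+1)) ∈ t
    · have h2t : ¬ ((j : ℕ) : Fin (m+1)) ∈ t := fun h => hne ⟨fun _ => h, fun _ => h1t⟩
      show Dt t _ * Dt t _ = 0
      simp only [hDtdef]
      rw [if_pos h1t, if_neg h2t, hB1, mul_one]
      rw [smul_mul_assoc, mul_smul_comm]
      rw [← mul_assoc, hPE _, zero_mul, smul_zero, smul_zero]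
    · have h2t : ((j : ℕ) : Fin (m+1)) ∈ t := by
        rcases Classical.em (((j : ℕ) : Fin (m+1)) ∈ t) with h | h
        · exact h
        · exact absurd ⟨fun h' => absurd h' h1t, fun h' => absurd h' h⟩ hne
      show Dt t _ * Dt t _ = 0
      simp only [hDtdef]
      rw [if_neg h1t, if_pos h2t, hB1, mul_one]
      rw [smul_mul_assoc, mul_smul_comm]
      rw [← mul_assoc, hEP _, zero_mul, smul_zero, smul_zero]
  have hPuniv : ∀ p : ℕ, p ≤ m →
      W (fun j : ℕ => Dt Finset.univ ((j : Fin (m+1)))) p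
      = (∏ j ∈ Finset.range (p+1), (lam ((j : Fin (m+1))) : ℂ)) • (P * σ) := by
    intro p
    induction p with
    | zero =>
        intro _
        show Dt Finset.univ (((0:ℕ) : Fin (m+1))) = _
        simp only [hDtdef]
        rw [if_pos (Finset.mem_univ _), hB0, Finset.prod_range_one]
    | succ p ih =>
        intro hp
        show Dt Finset.univ (((p+1:ℕ) : Fin (m+1))) * W _ p = _
        rw [ih (by omega)]
        simp only [hDtdef]
        rw [if_pos (Finset.mem_univ _), hBone (p+1) (by omega) (by omega), mul_one]
        rw [smul_mul_assoc, mul_smul_comm, ← mul_assoc, hPP, smul_smul]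
        congr 1
        simp only [Finset.prod_range_succ]
        ring
  have hPtrace : (P * σ).trace = star ψ ⬝ᵥ σ.mulVec ψ := by
    rw [Matrix.trace]
    simp only [Matrix.diag_apply, Matrix.mul_apply, hPdef, Matrix.vecMulVec_apply,
      dotProduct, Matrix.mulVec, Finset.mul_sum]
    rw [Finset.sum_comm]
    refine Finset.sum_congr rfl fun c _ => Finset.sum_congr rfl fun a _ => by ring
  have hEuniv : ∀ p : ℕ, p ≤ m →
      W (fun j : ℕ => Dt ∅ ((j : Fin (m+1)))) p
      = (∏ j ∈ Finset.range (p+1), ((1:ℂ) - (lam ((j : Fin (m+1))) : ℂ)))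
          • (W (fun j : ℕ => E ((j : Fin (m+1)))) p * σ) := by
    intro p
    induction p with
    | zero =>
        intro _
        show Dt ∅ (((0:ℕ) : Fin (m+1))) = _
        simp only [hDtdef]
        rw [if_neg (Finset.notMem_empty _), hB0, Finset.prod_range_one]
        rfl
    | succ p ih =>
        intro hp
        show Dt ∅ (((p+1:ℕ) : Fin (m+1))) * W _ p = _
        rw [ih (by omega)]
        simp only [hDtdef]
        rw [if_neg (Finset.notMem_empty _), hBone (p+1) (by omega) (by omega), mul_one]
        rw [smul_mul_assoc, mul_smul_comm, smul_smul, ← mul_assoc]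
        congr 1
        simp only [Finset.prod_range_succ]
        ring
  have hprodlam : ∏ j ∈ Finset.range (m+1), (lam ((j : Fin (m+1))) : ℂ)
      = ∏ μ, (lam μ : ℂ) := by
    rw [← Fin.prod_univ_eq_prod_range (fun j => (lam ((j : Fin (m+1))) : ℂ)) (m+1)]
    exact Finset.prod_congr rfl fun μ _ => by rw [Fin.cast_val_eq_self]
  have hprodone : ∏ j ∈ Finset.range (m+1), ((1:ℂ) - (lam ((j : Fin (m+1))) : ℂ))
      = ∏ μ, ((1:ℂ) - (lam μ : ℂ)) := by
    rw [← Fin.prod_univ_eq_prod_range (fun j => ((1:ℂ) - (lam ((j : Fin (m+1))) : ℂ))) (m+1)]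
    exact Finset.prod_congr rfl fun μ _ => by rw [Fin.cast_val_eq_self]
  have htot : (tensPow Bm * cyclicShift d (m+1) * tensPow ρ).trace
      = (∏ μ, ((1:ℂ) - (lam μ : ℂ))) * ((W (fun j : ℕ => E ((j : Fin (m+1)))) m * σ).trace)
        + (∏ μ, (lam μ : ℂ)) * (star ψ ⬝ᵥ σ.mulVec ψ) := by
    rw [hA, hexp]
    have hzero' : ∀ t ∈ (Finset.univ : Finset (Finset (Fin (m+1)))),
        t ∉ ({∅, Finset.univ} : Finset (Finset (Fin (m+1)))) →
        (∑ k : Fin (m+1) → Fin d, ∏ μ, (Dt t μ) (k μ) (k (μ - 1))) = 0 := by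
      intro t _ ht
      simp only [Finset.mem_insert, Finset.mem_singleton] at ht
      push_neg at ht
      rw [hTt t]
      exact hvanish t ht.1.ne_empty ht.2
    rw [← Finset.sum_subset (Finset.subset_univ _) hzero']
    rw [Finset.sum_pair (Ne.symm (Finset.univ_nonempty.ne_empty))]
    rw [hTt, hTt, hPuniv m le_rfl, hEuniv m le_rfl]
    rw [Matrix.trace_smul, Matrix.trace_smul, smul_eq_mul, smul_eq_mul]
    rw [hPtrace, hprodlam, hprodone]
  have hbound : ‖(W (fun j : ℕ => E ((j : Fin (m+1)))) m * σ).trace‖ ≤ 1 := by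
    obtain ⟨p, rfl⟩ : ∃ p, m = p + 1 := ⟨m - 1, by omega⟩
    rw [W_shift, Matrix.trace_mul_comm, ← mul_assoc]
    refine le_trans (abs_trace_mul_le _ _ (hE _)) ?_
    rw [hEtr, Complex.one_re, mul_one]
    refine le_trans (norm_clm_mul_le _ _) ?_
    calc ‖clm σ‖ * ‖clm (W (fun j : ℕ => E (((j+1 : ℕ) : Fin (p+1+1)))) p)‖
        ≤ 1 * 1 := by
          refine mul_le_mul hσ ?_ (norm_nonneg _) zero_le_one
          exact norm_clm_W_le_one _ (fun j => hE _) (fun j => hEtr _) p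
      _ = 1 := mul_one 1
  rw [htot, add_sub_cancel_right, norm_mul]
  have hcast : (∏ μ, ((1:ℂ) - (lam μ : ℂ))) = ((∏ μ, (1 - lam μ) : ℝ) : ℂ) := by
    push_cast
    rfl
  rw [hcast, Complex.norm_real, Real.norm_eq_abs]
  have hnn : (0:ℝ) ≤ ∏ μ, (1 - lam μ) := Finset.prod_nonneg fun μ _ => by
    have := (hlam μ).2; linarith
  rw [abs_of_nonneg hnn]
  calc (∏ μ, (1 - lam μ)) * ‖(W (fun j : ℕ => E ((j : Fin (m+1)))) m * σ).trace‖
      ≤ (∏ μ, (1 - lam μ)) * 1 := mul_le_mul_of_nonneg_left hbound hnn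
    _ = ∏ μ, (1 - lam μ) := mul_one _
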